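/- Let H be a complex Hilbert space, let k > 1 be an integer with k < dim H, let X, Y be adjacent k-dimensional subspaces of H, and let S be the 2-dimensional orthogonal complement of X ∩ Y in X + Y. A k-dimensional subspace Z of H with Z ⊆ X + Y is ortho-adjacent to both X and Y if and only if Z = S + W for some (k − 2)-dimensional subspace W of X ∩ Y. -/

import Mathlib

noncomputable section

open scoped Classical

variable {H : Type*} [NormedAddCommGroup H] [InnerProductSpace ℂ H] [CompleteSpace H]

/-- The orthogonal projection onto `X`, as an operator `H → H` (junk value `0` if the
orthogonal projection onto `X` does not exist; it always exists for finite-dimensional,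
and more generally complete, subspaces). -/
noncomputable def projOn (X : Submodule ℂ H) : H →L[ℂ] H :=
  if h : X.HasOrthogonalProjection then
    haveI := h
    X.subtypeL.comp (X.orthogonalProjectionOnto)
  else 0

/-- Two subspaces of `H` are compatible if their orthogonal projections commute. -/
def Compatible (X Y : Submodule ℂ H) : Prop :=
  projOn X * projOn Y = projOn Y * projOn X

/-- `X` is a `k`-dimensional subspace of `H`. -/
def IsDim (k : ℕ) (X : Submodule ℂ H) : Prop :=
  FiniteDimensional ℂ X ∧ Module.finrank ℂ X = k

/-- Two (distinct) `k`-dimensional subspaces are adjacent if their intersection is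
`(k-1)`-dimensional. -/
def AdjacentSub (k : ℕ) (X Y : Submodule ℂ H) : Prop :=
  X ≠ Y ∧ Module.finrank ℂ ↥(X ⊓ Y) = k - 1

/-- Ortho-adjacency: adjacent and compatible. -/
def OrthoAdjacent (k : ℕ) (X Y : Submodule ℂ H) : Prop :=
  AdjacentSub k X Y ∧ Compatible X Y

/-- The ortho-Grassmann graph `Γ⊥_k(H)` on the `k`-dimensional subspaces of `H`:
two `k`-dimensional subspaces are connected by an edge if they are ortho-adjacent. -/
def orthoGrassmannGraph (H : Type*) [NormedAddCommGroup H] [InnerProductSpace ℂ H]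
    [CompleteSpace H] (k : ℕ) : SimpleGraph {X : Submodule ℂ H // IsDim k X} where
  Adj X Y := OrthoAdjacent k X.1 Y.1
  symm := ⟨by
    rintro X Y ⟨⟨hne, hdim⟩, hc⟩
    refine ⟨⟨hne.symm, by rwa [inf_comm]⟩, ?_⟩
    unfold Compatible at hc ⊢
    exact hc.symm⟩
  loopless := ⟨fun X h => h.1.1 rfl⟩

/-- The Grassmann graph `Γ_k(H)` on the `k`-dimensional subspaces of `H`:
two `k`-dimensional subspaces are connected by an edge if they are adjacent. -/
def grassmannGraph (H : Type*) [NormedAddCommGroup H] [InnerProductSpace ℂ H]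
    [CompleteSpace H] (k : ℕ) : SimpleGraph {X : Submodule ℂ H // IsDim k X} where
  Adj X Y := AdjacentSub k X.1 Y.1
  symm := ⟨by
    rintro X Y ⟨hne, hdim⟩
    exact ⟨hne.symm, by rwa [inf_comm]⟩⟩
  loopless := ⟨fun X h => h.1 rfl⟩

lemma projOn_def (X : Submodule ℂ H) [h : X.HasOrthogonalProjection] :
    projOn X = X.subtypeL.comp (X.orthogonalProjectionOnto) := dif_pos h

lemma projOn_apply_mem (X : Submodule ℂ H) [X.HasOrthogonalProjection] (v : H) :
    projOn X v ∈ X := by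
  rw [projOn_def]; exact (X.orthogonalProjectionOnto v).2

lemma projOn_apply_eq_self {X : Submodule ℂ H} [X.HasOrthogonalProjection] {v : H}
    (h : v ∈ X) : projOn X v = v := by
  rw [projOn_def]; exact Submodule.starProjection_eq_self_iff.2 h

lemma projOn_apply_eq_zero {X : Submodule ℂ H} [X.HasOrthogonalProjection] {v : H}
    (h : v ∈ Xᗮ) : projOn X v = 0 := by
  rw [projOn_def]
  simp only [ContinuousLinearMap.comp_apply]
  rw [Submodule.orthogonalProjectionOnto_apply_of_mem_orthogonal h]
  simp

lemma sub_projOn_mem_orthogonal (X : Submodule ℂ H) [X.HasOrthogonalProjection] (v : H) :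
    v - projOn X v ∈ Xᗮ := by
  rw [projOn_def]; exact Submodule.sub_starProjection_mem_orthogonal v

lemma projOn_eq_of {X : Submodule ℂ H} [X.HasOrthogonalProjection] {u v : H}
    (hv : v ∈ X) (h : u - v ∈ Xᗮ) : projOn X u = v := by
  have h1 := Submodule.eq_starProjection_of_mem_orthogonal (K := X) hv h
  rw [projOn_def]
  simpa using h1

/-- If `Z` decomposes along `X`, then `P_X ∘ P_Z = P_{X ⊓ Z}`. -/
lemma projOn_mul_projOn (X Z : Submodule ℂ H) [FiniteDimensional ℂ X] [FiniteDimensional ℂ Z]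
    (hZ : Z = (X ⊓ Z) ⊔ (Xᗮ ⊓ Z)) : projOn X * projOn Z = projOn (X ⊓ Z) := by
  haveI : FiniteDimensional ℂ ↥(X ⊓ Z) := Submodule.finiteDimensional_of_le inf_le_left
  ext h
  show projOn X (projOn Z h) = projOn (X ⊓ Z) h
  obtain ⟨a, ha, b, hb, hab⟩ := Submodule.mem_sup.1 (hZ.le (projOn_apply_mem Z h))
  have h1 : projOn X (projOn Z h) = a := by
    rw [← hab, map_add, projOn_apply_eq_self ha.1, projOn_apply_eq_zero hb.1, add_zero]
  rw [h1]
  symm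
  apply projOn_eq_of ha
  have h2 : h - a = (h - projOn Z h) + b := by rw [← hab]; abel
  rw [h2]
  exact add_mem (Submodule.orthogonal_le inf_le_right (sub_projOn_mem_orthogonal Z h))
    (Submodule.orthogonal_le inf_le_left hb.1)

lemma compatible_of_decomp (X Z : Submodule ℂ H) [FiniteDimensional ℂ X] [FiniteDimensional ℂ Z]
    (hZ : Z = (X ⊓ Z) ⊔ (Xᗮ ⊓ Z)) (hX : X = (Z ⊓ X) ⊔ (Zᗮ ⊓ X)) : Compatible X Z := by
  unfold Compatible
  rw [projOn_mul_projOn X Z hZ, projOn_mul_projOn Z X hX, inf_comm]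

lemma decomp_of_compatible (X Z : Submodule ℂ H) [FiniteDimensional ℂ X] [FiniteDimensional ℂ Z]
    (h : Compatible X Z) : Z = (X ⊓ Z) ⊔ (Xᗮ ⊓ Z) := by
  refine le_antisymm (fun z hz => ?_) (sup_le inf_le_right inf_le_right)
  have hxz : projOn X z ∈ Z := by
    have h0 : projOn X (projOn Z z) = projOn Z (projOn X z) := by
      have := congrArg (fun f : H →L[ℂ] H => f z) h
      simpa using this
    rw [projOn_apply_eq_self hz] at h0
    rw [h0]
    exact projOn_apply_mem Z _
  have h1 : z = projOn X z + (z - projOn X z) := by abel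
  rw [h1]
  exact Submodule.add_mem_sup ⟨projOn_apply_mem X z, hxz⟩
    ⟨sub_projOn_mem_orthogonal X z, sub_mem hz hxz⟩

lemma sup_inf_orthogonal {K M : Submodule ℂ H} [FiniteDimensional ℂ K] (h : K ≤ M) :
    K ⊔ (M ⊓ Kᗮ) = M := by
  refine le_antisymm (sup_le h inf_le_left) (fun m hm => ?_)
  have h1 : projOn K m ∈ K := projOn_apply_mem K m
  have h2 : m = projOn K m + (m - projOn K m) := by abel
  rw [h2]
  exact Submodule.add_mem_sup h1 ⟨sub_mem hm (h h1), sub_projOn_mem_orthogonal K m⟩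

lemma inf_eq_bot_of_le_orth {A B N : Submodule ℂ H} (hA : A ≤ N) (hB : B ≤ Nᗮ) :
    A ⊓ B = ⊥ := by
  have h1 : A ⊓ B ≤ N ⊓ Nᗮ := inf_le_inf hA hB
  rw [Submodule.inf_orthogonal_eq_bot] at h1
  exact le_bot_iff.1 h1

lemma finrank_sup_eq_add {A B : Submodule ℂ H} [FiniteDimensional ℂ A] [FiniteDimensional ℂ B]
    (h : A ⊓ B = ⊥) :
    Module.finrank ℂ ↥(A ⊔ B) = Module.finrank ℂ A + Module.finrank ℂ B := by
  have h1 := Submodule.finrank_sup_add_finrank_inf_eq A B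
  rw [h] at h1
  simpa using h1

lemma aux_back (k : ℕ) (hk : 1 < k) (X Z N M W : Submodule ℂ H)
    [FiniteDimensional ℂ M]
    (hNX : N ≤ X) (hXM : X ≤ M)
    (hdX : Module.finrank ℂ X = k) (hdN : Module.finrank ℂ N = k - 1)
    (hdM : Module.finrank ℂ M = k + 1)
    (hWN : W ≤ N) (hdW : Module.finrank ℂ W = k - 2)
    (hZ : Z = (M ⊓ Nᗮ) ⊔ W) :
    OrthoAdjacent k Z X := by
  haveI : FiniteDimensional ℂ X := Submodule.finiteDimensional_of_le hXM
  haveI : FiniteDimensional ℂ N := Submodule.finiteDimensional_of_le hNX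
  haveI : FiniteDimensional ℂ W := Submodule.finiteDimensional_of_le hWN
  set S : Submodule ℂ H := M ⊓ Nᗮ with hS
  set L : Submodule ℂ H := X ⊓ Nᗮ with hL
  haveI : FiniteDimensional ℂ S := Submodule.finiteDimensional_of_le inf_le_left
  haveI : FiniteDimensional ℂ L := Submodule.finiteDimensional_of_le inf_le_left
  have hLS : L ≤ S := inf_le_inf hXM le_rfl
  have hSN : S ≤ Nᗮ := inf_le_right
  have hLN : L ≤ Nᗮ := inf_le_right
  have hSM : S ≤ M := inf_le_left
  have hNS : N ≤ Sᗮ := (Submodule.le_orthogonal_orthogonal N).trans (Submodule.orthogonal_le hSN)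
  haveI : FiniteDimensional ℂ Z := by
    rw [hZ]; exact Submodule.finiteDimensional_of_le (sup_le hSM (hWN.trans (hNX.trans hXM)))
  -- decompositions
  have hXdec : N ⊔ L = X := sup_inf_orthogonal hNX
  have hMdec : N ⊔ S = M := sup_inf_orthogonal (hNX.trans hXM)
  -- dims
  have hdL : Module.finrank ℂ L = 1 := by
    have h1 : Module.finrank ℂ ↥(N ⊔ L) = Module.finrank ℂ N + Module.finrank ℂ L :=
      finrank_sup_eq_add (inf_eq_bot_of_le_orth le_rfl hLN)
    rw [hXdec, hdX, hdN] at h1; omega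
  have hdS : Module.finrank ℂ S = 2 := by
    have h1 : Module.finrank ℂ ↥(N ⊔ S) = Module.finrank ℂ N + Module.finrank ℂ S :=
      finrank_sup_eq_add (inf_eq_bot_of_le_orth le_rfl hSN)
    rw [hMdec, hdM, hdN] at h1; omega
  set L' : Submodule ℂ H := S ⊓ Lᗮ with hL'
  haveI : FiniteDimensional ℂ L' := Submodule.finiteDimensional_of_le inf_le_left
  have hSdec : L ⊔ L' = S := sup_inf_orthogonal hLS
  have hdL' : Module.finrank ℂ L' = 1 := by
    have h1 : Module.finrank ℂ ↥(L ⊔ L') = Module.finrank ℂ L + Module.finrank ℂ L' :=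
      finrank_sup_eq_add (inf_eq_bot_of_le_orth (le_refl L) inf_le_right)
    rw [hSdec, hdS, hdL] at h1; omega
  set W' : Submodule ℂ H := N ⊓ Wᗮ with hW'
  haveI : FiniteDimensional ℂ W' := Submodule.finiteDimensional_of_le inf_le_left
  have hNdec : W ⊔ W' = N := sup_inf_orthogonal hWN
  -- key : Z ⊓ X = L ⊔ W
  have hWZ : W ≤ Z := hZ.ge.trans' le_sup_right
  have hSZ : S ≤ Z := hZ.ge.trans' le_sup_left
  have hSX : S ⊓ X = L := by
    refine le_antisymm (fun v hv => ⟨hv.2, hv.1.2⟩) (le_inf hLS inf_le_left)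
  have hkey : Z ⊓ X = L ⊔ W := by
    refine le_antisymm (fun z hz => ?_)
      (sup_le (le_inf (hLS.trans hSZ) inf_le_left) (le_inf hWZ (hWN.trans hNX)))
    obtain ⟨s, hs, w, hw, hsw⟩ := Submodule.mem_sup.1 (hZ.le hz.1)
    have hsX : s ∈ X := by
      have : s = z - w := by rw [← hsw]; abel
      rw [this]; exact sub_mem hz.2 (hNX (hWN hw))
    have hsL : s ∈ L := hSX ▸ ⟨hs, hsX⟩
    rw [← hsw]; exact Submodule.add_mem_sup hsL hw
  have hdZX : Module.finrank ℂ ↥(Z ⊓ X) = k - 1 := by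
    rw [hkey, finrank_sup_eq_add (inf_eq_bot_of_le_orth hLN (hWN.trans (Submodule.le_orthogonal_orthogonal N))), hdL, hdW]; omega
  -- Z ≠ X
  have hne : Z ≠ X := by
    intro h
    have hMX : M ≤ X := by
      rw [← hMdec]; exact sup_le hNX (h ▸ hSZ)
    have := Submodule.finrank_mono hMX
    rw [hdM, hdX] at this; omega
  refine ⟨⟨hne, hdZX⟩, ?_⟩
  -- compatibility : Compatible Z X
  have hL'Z : L' ≤ Z := (inf_le_left.trans hSZ : L' ≤ Z)
  have hL'X : L' ≤ Xᗮ := by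
    rw [← hXdec, ← Submodule.inf_orthogonal]
    exact le_inf ((inf_le_left (b := Lᗮ)).trans hSN) inf_le_right
  have hW'Z : W' ≤ Zᗮ := by
    rw [hZ, ← Submodule.inf_orthogonal]
    exact le_inf (inf_le_left.trans hNS) inf_le_right
  have hA : X = (Z ⊓ X) ⊔ (Zᗮ ⊓ X) := by
    refine le_antisymm ?_ (sup_le inf_le_right inf_le_right)
    conv_lhs => rw [← hXdec, ← hNdec]
    refine sup_le (sup_le ?_ ?_) ?_
    · exact le_trans (le_inf hWZ (hWN.trans hNX)) le_sup_left
    · exact le_trans (le_inf hW'Z (inf_le_left.trans hNX)) le_sup_right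
    · exact le_trans (le_inf (hLS.trans hSZ) inf_le_left) le_sup_left
  have hB : Z = (X ⊓ Z) ⊔ (Xᗮ ⊓ Z) := by
    refine le_antisymm ?_ (sup_le inf_le_right inf_le_right)
    conv_lhs => rw [hZ, ← hSdec]
    refine sup_le (sup_le ?_ ?_) ?_
    · exact le_trans (le_inf inf_le_left (hLS.trans hSZ)) le_sup_left
    · exact le_trans (le_inf hL'X hL'Z) le_sup_right
    · exact le_trans (le_inf (hWN.trans hNX) hWZ) le_sup_left
  exact compatible_of_decomp Z X hA hB

/-- Let `X, Y` be adjacent `k`-dimensional subspaces of `H` with `1 < k < dim H`, and let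
`(X + Y) ∩ (X ∩ Y)ᗮ` be the (`2`-dimensional) orthogonal complement of `X ∩ Y` in `X + Y`.
A `k`-dimensional subspace `Z ⊆ X + Y` is ortho-adjacent to both `X, Y` if and only if
`Z = S + W` for some `(k-2)`-dimensional subspace `W ⊆ X ∩ Y`. -/
theorem orthoAdjacent_to_both_iff_of_le_sup
    (k : ℕ) (hk : 1 < k) (hkH : (k : Cardinal) < Module.rank ℂ H)
    (X Y Z : Submodule ℂ H) (hX : IsDim k X) (hY : IsDim k Y) (hZ : IsDim k Z)
    (hXY : AdjacentSub k X Y) (hZle : Z ≤ X ⊔ Y) :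
    (OrthoAdjacent k Z X ∧ OrthoAdjacent k Z Y) ↔
      ∃ W : Submodule ℂ H, IsDim (k - 2) W ∧ W ≤ X ⊓ Y ∧
        Z = ((X ⊔ Y) ⊓ (X ⊓ Y)ᗮ) ⊔ W := by

  obtain ⟨hXfin, hdX⟩ := hX
  obtain ⟨hYfin, hdY⟩ := hY
  obtain ⟨hZfin, hdZ⟩ := hZ
  obtain ⟨hXYne, hdXY⟩ := hXY
  haveI : FiniteDimensional ℂ X := hXfin
  haveI : FiniteDimensional ℂ Y := hYfin
  haveI : FiniteDimensional ℂ Z := hZfin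
  haveI : FiniteDimensional ℂ ↥(X ⊔ Y) := Submodule.finiteDimensional_sup X Y
  haveI : FiniteDimensional ℂ ↥(X ⊓ Y) := Submodule.finiteDimensional_of_le inf_le_left
  haveI : FiniteDimensional ℂ ↥((X ⊔ Y) ⊓ (X ⊓ Y)ᗮ) :=
    Submodule.finiteDimensional_of_le inf_le_left
  have hdM : Module.finrank ℂ ↥(X ⊔ Y) = k + 1 := by
    have h1 := Submodule.finrank_sup_add_finrank_inf_eq X Y
    rw [hdX, hdY, hdXY] at h1
    have hk1 : Module.finrank ℂ ↥(X ⊓ Y) ≤ Module.finrank ℂ X :=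
      Submodule.finrank_mono inf_le_left
    -- need X ≠ Y implies finrank (X⊔Y) > k ; easier: finrank XY ≥ k and from h1
    omega
  have hNM : (X ⊓ Y : Submodule ℂ H) ≤ X ⊔ Y := inf_le_left.trans le_sup_left
  have hMdec : (X ⊓ Y) ⊔ ((X ⊔ Y) ⊓ (X ⊓ Y)ᗮ) = X ⊔ Y := sup_inf_orthogonal hNM
  have hdS : Module.finrank ℂ ↥((X ⊔ Y) ⊓ (X ⊓ Y)ᗮ) = 2 := by
    have h1 := finrank_sup_eq_add
      (inf_eq_bot_of_le_orth (le_refl (X ⊓ Y)) (inf_le_right : (X ⊔ Y) ⊓ (X ⊓ Y)ᗮ ≤ (X ⊓ Y)ᗮ))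
    rw [hMdec, hdM, hdXY] at h1
    omega
  constructor
  · rintro ⟨⟨⟨hneX, hdZX⟩, hcX⟩, ⟨⟨hneY, hdZY⟩, hcY⟩⟩
    set S : Submodule ℂ H := (X ⊔ Y) ⊓ (X ⊓ Y)ᗮ with hS
    set L1 : Submodule ℂ H := Xᗮ ⊓ Z with hL1
    set L2 : Submodule ℂ H := Yᗮ ⊓ Z with hL2
    haveI : FiniteDimensional ℂ L1 := Submodule.finiteDimensional_of_le inf_le_right
    haveI : FiniteDimensional ℂ L2 := Submodule.finiteDimensional_of_le inf_le_right
    have hZdecX : Z = (X ⊓ Z) ⊔ L1 := decomp_of_compatible X Z (Eq.symm hcX)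
    have hZdecY : Z = (Y ⊓ Z) ⊔ L2 := decomp_of_compatible Y Z (Eq.symm hcY)
    have hd1 : Module.finrank ℂ L1 = 1 := by
      have h1 := finrank_sup_eq_add (A := X ⊓ Z) (B := L1)
        (inf_eq_bot_of_le_orth (inf_le_left : X ⊓ Z ≤ X) (inf_le_left : L1 ≤ Xᗮ))
      rw [← hZdecX, hdZ] at h1
      rw [inf_comm] at hdZX
      omega
    have hd2 : Module.finrank ℂ L2 = 1 := by
      have h1 := finrank_sup_eq_add (A := Y ⊓ Z) (B := L2)
        (inf_eq_bot_of_le_orth (inf_le_left : Y ⊓ Z ≤ Y) (inf_le_left : L2 ≤ Yᗮ))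
      rw [← hZdecY, hdZ] at h1
      rw [inf_comm] at hdZY
      omega
    have hL1S : L1 ≤ S := le_inf (inf_le_right.trans hZle)
      (inf_le_left.trans (Submodule.orthogonal_le inf_le_left))
    have hL2S : L2 ≤ S := le_inf (inf_le_right.trans hZle)
      (inf_le_left.trans (Submodule.orthogonal_le inf_le_right))
    have hL1Z : L1 ≤ Z := inf_le_right
    have hL2Z : L2 ≤ Z := inf_le_right
    have hne12 : L1 ≠ L2 := by
      intro h
      have hXle : X ≤ L1ᗮ :=
        (Submodule.le_orthogonal_orthogonal X).trans (Submodule.orthogonal_le inf_le_left)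
      have hYle : Y ≤ L2ᗮ :=
        (Submodule.le_orthogonal_orthogonal Y).trans (Submodule.orthogonal_le inf_le_left)
      rw [← h] at hYle
      have h2 : L1 ≤ L1ᗮ := hL1Z.trans (hZle.trans (sup_le hXle hYle))
      have h3 : L1 ≤ L1 ⊓ L1ᗮ := le_inf le_rfl h2
      rw [Submodule.inf_orthogonal_eq_bot] at h3
      have h4 : L1 = ⊥ := le_bot_iff.1 h3
      rw [h4] at hd1
      simp at hd1
    have hinf12 : L1 ⊓ L2 = ⊥ := by
      by_contra hcon
      have hle1 : Module.finrank ℂ ↥(L1 ⊓ L2) ≤ 1 := hd1 ▸ Submodule.finrank_mono inf_le_left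
      haveI : FiniteDimensional ℂ ↥(L1 ⊓ L2) := Submodule.finiteDimensional_of_le inf_le_left
      have hge1 : Module.finrank ℂ ↥(L1 ⊓ L2) ≠ 0 := by
        rwa [ne_eq, Submodule.finrank_eq_zero]
      have heq : Module.finrank ℂ ↥(L1 ⊓ L2) = Module.finrank ℂ L1 := by omega
      have h5 : L1 ⊓ L2 = L1 := Submodule.eq_of_le_of_finrank_eq inf_le_left heq
      have h6 : L1 ≤ L2 := h5 ▸ inf_le_right
      exact hne12 (Submodule.eq_of_le_of_finrank_eq h6 (by rw [hd1, hd2]))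
    have hSsub : L1 ⊔ L2 = S := Submodule.eq_of_le_of_finrank_eq (sup_le hL1S hL2S)
      (by rw [finrank_sup_eq_add hinf12, hd1, hd2, hdS])
    have hSZ : S ≤ Z := hSsub ▸ sup_le hL1Z hL2Z
    have hZeq : Z = S ⊔ (Z ⊓ (X ⊓ Y)) := by
      refine le_antisymm (fun z hz => ?_) (sup_le hSZ inf_le_left)
      obtain ⟨n, hn, s, hs, hns⟩ := Submodule.mem_sup.1 (hMdec.ge (hZle hz))
      have h7 : n ∈ Z := by
        have h8 : n = z - s := by rw [← hns]; abel
        rw [h8]; exact sub_mem hz (hSZ hs)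
      have h9 : z = s + n := by rw [← hns]; abel
      rw [h9]
      exact Submodule.add_mem_sup hs ⟨h7, hn⟩
    haveI : FiniteDimensional ℂ ↥(Z ⊓ (X ⊓ Y)) := Submodule.finiteDimensional_of_le inf_le_left
    have hdW : Module.finrank ℂ ↥(Z ⊓ (X ⊓ Y)) = k - 2 := by
      have h9 := finrank_sup_eq_add (A := S) (B := Z ⊓ (X ⊓ Y))
        (inf_eq_bot_of_le_orth (inf_le_right : S ≤ (X ⊓ Y)ᗮ)
          ((inf_le_right : Z ⊓ (X ⊓ Y) ≤ X ⊓ Y).trans (Submodule.le_orthogonal_orthogonal _)))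
      rw [← hZeq, hdZ, hdS] at h9
      omega
    exact ⟨Z ⊓ (X ⊓ Y), ⟨inferInstance, hdW⟩, inf_le_right, hZeq⟩
  · rintro ⟨W, ⟨hWfin, hdW⟩, hWle, hZeq⟩
    haveI : FiniteDimensional ℂ W := hWfin
    constructor
    · exact aux_back k hk X Z (X ⊓ Y) (X ⊔ Y) W inf_le_left le_sup_left hdX hdXY hdM
        hWle hdW hZeq
    · exact aux_back k hk Y Z (X ⊓ Y) (X ⊔ Y) W inf_le_right le_sup_right hdY hdXY hdM
        hWle hdW hZeq

end
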